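/- For an n×n max-plus matrix A, the Kleene star A* = I ⊕ A ⊕ A² ⊕ ... (entrywise supremum of all max-plus powers, with I the identity) exists (all entries finite or -∞, i.e., the supremum is not +∞) if and only if the maximal cycle mean λ(A) is at most 0 (the max-plus unit). -/

import Mathlib

namespace MaxPlus

/-- Max-plus (tropical) matrix product over `EReal` (`⊥ = -∞` is the max-plus zero,
`+` is the max-plus multiplication, `⊔`/`⨆` is the max-plus addition). -/
noncomputable def mmul {n : ℕ} (A B : Matrix (Fin n) (Fin n) EReal) : Matrix (Fin n) (Fin n) EReal :=
  fun i j => ⨆ k, A i k + B k j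

/-- The max-plus identity matrix. -/
noncomputable def mId (n : ℕ) : Matrix (Fin n) (Fin n) EReal := fun i j => if i = j then 0 else ⊥

/-- Max-plus matrix powers. -/
noncomputable def mpow {n : ℕ} (A : Matrix (Fin n) (Fin n) EReal) : ℕ → Matrix (Fin n) (Fin n) EReal
  | 0 => mId n
  | m + 1 => mmul (mpow A m) A

/-- The max-plus Kleene star `A* = I ⊕ A ⊕ A² ⊕ ⋯` (entrywise supremum of all powers). -/
noncomputable def mstar {n : ℕ} (A : Matrix (Fin n) (Fin n) EReal) : Matrix (Fin n) (Fin n) EReal :=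
  fun i j => ⨆ m, mpow A m i j

/-- Weight of the cycle determined by the list `l = [i₁,…,i_k]`,
namely `A i₁ i₂ + ⋯ + A i_k i₁`. -/
noncomputable def cycleWeight {n : ℕ} (A : Matrix (Fin n) (Fin n) EReal) (l : List (Fin n)) : EReal :=
  ((l.zip (l.rotate 1)).map fun p => A p.1 p.2).sum

/-- A nonempty list of pairwise distinct indices, representing an elementary cycle. -/
def IsCycle {n : ℕ} (l : List (Fin n)) : Prop := l ≠ [] ∧ l.Nodup

/-- All elementary cycles have nonpositive weight, i.e. the maximal cycle mean `λ(A) ≤ 0`. -/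
def CycleBound {n : ℕ} (A : Matrix (Fin n) (Fin n) EReal) : Prop :=
  ∀ l : List (Fin n), IsCycle l → cycleWeight A l ≤ 0

/-- A definite matrix: maximal cycle mean `0` and zero (max-plus unit) diagonal.
(The diagonal entries give cycles of weight `0`, so `λ(A) = 0` is equivalent to
`CycleBound A` here.) -/
def Definite {n : ℕ} (A : Matrix (Fin n) (Fin n) EReal) : Prop :=
  CycleBound A ∧ ∀ i, A i i = 0

/-- Max-plus action of a matrix on a vector: `(A ⊙ x)_i = max_j (A_{ij} + x_j)`. -/
noncomputable def mapVec {n : ℕ} (A : Matrix (Fin n) (Fin n) EReal) (x : Fin n → EReal) :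
    Fin n → EReal :=
  fun i => ⨆ j, A i j + x j

/-- The max-plus eigenspace of `A` for the eigenvalue `0`. -/
def eig {n : ℕ} (A : Matrix (Fin n) (Fin n) EReal) : Set (Fin n → EReal) :=
  {x | mapVec A x = x}

/-- The max-plus column span of a matrix. -/
def mspan {n : ℕ} (A : Matrix (Fin n) (Fin n) EReal) : Set (Fin n → EReal) :=
  {y | ∃ α : Fin n → EReal, y = fun i => ⨆ j, α j + A i j}

/-! ### Auxiliary lemmas -/

lemma ereal_iSup_add {ι : Sort*} (f : ι → EReal) (a : EReal) :
    (⨆ i, f i) + a = ⨆ i, f i + a := by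
  refine le_antisymm ?_ (iSup_le fun i => add_le_add_left (le_iSup f i) a)
  rcases eq_or_ne a ⊥ with rfl | ha
  · rw [EReal.add_bot]; exact bot_le
  rcases eq_or_ne (⨆ i, f i) ⊥ with hs | hs
  · rw [hs, EReal.bot_add]; exact bot_le
  rcases eq_or_ne a ⊤ with rfl | hat
  · have : ∃ i, f i ≠ ⊥ := by
      by_contra h
      push_neg at h
      exact hs (iSup_eq_bot.2 h)
    obtain ⟨i, hi⟩ := this
    calc (⨆ i, f i) + ⊤ ≤ ⊤ := le_top
    _ = f i + ⊤ := (EReal.add_top_of_ne_bot hi).symm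
    _ ≤ ⨆ i, f i + ⊤ := le_iSup (fun i => f i + ⊤) i
  · exact (EReal.le_sub_iff_add_le (Or.inl ha) (Or.inl hat)).1
      (iSup_le fun i => (EReal.le_sub_iff_add_le (Or.inl ha) (Or.inl hat)).2
        (le_iSup (fun i => f i + a) i))

lemma ereal_add_iSup {ι : Sort*} (a : EReal) (f : ι → EReal) :
    a + (⨆ i, f i) = ⨆ i, a + f i := by
  rw [add_comm, ereal_iSup_add]
  exact iSup_congr fun i => add_comm _ _

lemma mmul_assoc {n : ℕ} (A B C : Matrix (Fin n) (Fin n) EReal) :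
    mmul (mmul A B) C = mmul A (mmul B C) := by
  funext i j
  show (⨆ k, (⨆ l, A i l + B l k) + C k j) = ⨆ l, A i l + ⨆ k, B l k + C k j
  calc (⨆ k, (⨆ l, A i l + B l k) + C k j)
      = ⨆ k, ⨆ l, A i l + B l k + C k j := by
        exact iSup_congr fun k => ereal_iSup_add _ _
    _ = ⨆ l, ⨆ k, A i l + (B l k + C k j) := by
        rw [iSup_comm]
        exact iSup_congr fun l => iSup_congr fun k => add_assoc _ _ _
    _ = ⨆ l, A i l + ⨆ k, B l k + C k j := by
        exact iSup_congr fun l => (ereal_add_iSup _ _).symm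

lemma mmul_mId {n : ℕ} (A : Matrix (Fin n) (Fin n) EReal) : mmul A (mId n) = A := by
  funext i j
  refine le_antisymm (iSup_le fun k => ?_) ?_
  · by_cases h : k = j
    · subst h; simp [mId]
    · simp [mId, h]
  · have : A i j + mId n j j = A i j := by simp [mId]
    exact this ▸ le_iSup (fun k => A i k + mId n k j) j

lemma mId_mmul {n : ℕ} (A : Matrix (Fin n) (Fin n) EReal) : mmul (mId n) A = A := by
  funext i j
  refine le_antisymm (iSup_le fun k => ?_) ?_
  · by_cases h : i = k
    · subst h; simp [mId]
    · simp [mId, h]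
  · have : mId n i i + A i j = A i j := by simp [mId]
    exact this ▸ le_iSup (fun k => mId n i k + A k j) i

lemma mpow_succ' {n : ℕ} (A : Matrix (Fin n) (Fin n) EReal) (m : ℕ) :
    mpow A (m + 1) = mmul A (mpow A m) := by
  induction m with
  | zero => show mmul (mId n) A = mmul A (mId n); rw [mId_mmul, mmul_mId]
  | succ m ih =>
      show mmul (mpow A (m + 1)) A = mmul A (mpow A (m + 1))
      conv_lhs => rw [ih]
      rw [mmul_assoc]
      rfl

lemma mpow_add {n : ℕ} (A : Matrix (Fin n) (Fin n) EReal) (a b : ℕ) :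
    mpow A (a + b) = mmul (mpow A a) (mpow A b) := by
  induction b with
  | zero => show mpow A a = mmul (mpow A a) (mId n); rw [mmul_mId]
  | succ b ih =>
      show mmul (mpow A (a + b)) A = mmul (mpow A a) (mmul (mpow A b) A)
      rw [ih, mmul_assoc]

/-- Weight of a path starting at `i` and visiting the vertices of `l` in order. -/
noncomputable def pw {n : ℕ} (A : Matrix (Fin n) (Fin n) EReal) : Fin n → List (Fin n) → EReal
  | _, [] => 0
  | i, j :: t => A i j + pw A j t

lemma pw_zip {n : ℕ} (A : Matrix (Fin n) (Fin n) EReal) :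
    ∀ (t : List (Fin n)) (i j : Fin n),
      pw A i (t ++ [j]) = (((i :: t).zip (t ++ [j])).map fun p => A p.1 p.2).sum := by
  intro t
  induction t with
  | nil => intro i j; simp [pw]
  | cons c t ih => intro i j; simp [pw, ih c j]

lemma cycleWeight_eq {n : ℕ} (A : Matrix (Fin n) (Fin n) EReal) (a : Fin n) (t : List (Fin n)) :
    cycleWeight A (a :: t) = pw A a (t ++ [a]) := by
  have hrot : (a :: t).rotate 1 = t ++ [a] := by
    rw [show (1 : ℕ) = 0 + 1 from rfl, List.rotate_cons_succ, List.rotate_zero]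
  rw [cycleWeight, hrot, pw_zip]

lemma pw_le_mpow {n : ℕ} (A : Matrix (Fin n) (Fin n) EReal) :
    ∀ (t : List (Fin n)) (i j : Fin n), pw A i (t ++ [j]) ≤ mpow A (t.length + 1) i j := by
  intro t
  induction t with
  | nil =>
      intro i j
      rw [mpow_succ']
      have h : A i j + mId n j j = pw A i [j] := by simp [mId, pw]
      exact h ▸ le_iSup (fun k => A i k + mId n k j) j
  | cons c t ih =>
      intro i j
      rw [mpow_succ']
      calc pw A i (c :: t ++ [j]) = A i c + pw A c (t ++ [j]) := rfl
        _ ≤ A i c + mpow A (t.length + 1) c j := add_le_add_right (ih c j) _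
        _ ≤ ⨆ k, A i k + mpow A (t.length + 1) k j :=
            le_iSup (fun k => A i k + mpow A (t.length + 1) k j) c

lemma pw_split {n : ℕ} (A : Matrix (Fin n) (Fin n) EReal) (x : Fin n) (v : List (Fin n)) :
    ∀ (u : List (Fin n)) (i : Fin n),
      pw A i (u ++ x :: v) = pw A i (u ++ [x]) + pw A x v := by
  intro u
  induction u with
  | nil => intro i; simp [pw, add_assoc]
  | cons c u ih => intro i; simp [pw, ih, add_assoc]

lemma dup_decomp {α : Type*} :
    ∀ (l : List α), ¬ l.Nodup → ∃ (l₁ : List α) (a : α) (l₂ l₃ : List α),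
      l = l₁ ++ a :: l₂ ++ a :: l₃ := by
  intro l
  induction l with
  | nil => intro h; exact absurd List.nodup_nil h
  | cons x t ih =>
      intro h
      by_cases hx : x ∈ t
      · obtain ⟨s, u, rfl⟩ := List.append_of_mem hx
        exact ⟨[], x, s, u, rfl⟩
      · have ht : ¬ t.Nodup := fun hn => h (List.nodup_cons.2 ⟨hx, hn⟩)
        obtain ⟨l₁, a, l₂, l₃, rfl⟩ := ih ht
        exact ⟨x :: l₁, a, l₂, l₃, rfl⟩

lemma min_dup {α : Type*} :
    ∀ (m : ℕ) (l : List α), l.length ≤ m → ¬ l.Nodup →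
      ∃ (l₁ : List α) (a : α) (l₂ l₃ : List α),
        l = l₁ ++ a :: l₂ ++ a :: l₃ ∧ (a :: l₂).Nodup := by
  intro m
  induction m with
  | zero =>
      intro l hl h
      have : l = [] := List.eq_nil_of_length_eq_zero (Nat.le_zero.1 hl)
      subst this
      exact absurd List.nodup_nil h
  | succ m ih =>
      intro l hl h
      obtain ⟨l₁, a, l₂, l₃, rfl⟩ := dup_decomp l h
      by_cases hn : (a :: l₂).Nodup
      · exact ⟨l₁, a, l₂, l₃, rfl, hn⟩
      · have hlen : (a :: l₂).length ≤ m := by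
          simp [List.length_append] at hl ⊢
          omega
        obtain ⟨p, b, q, r, heq, hq⟩ := ih (a :: l₂) hlen hn
        refine ⟨l₁ ++ p, b, q, r ++ a :: l₃, ?_, hq⟩
        have : (a :: l₂) ++ (a :: l₃) = (p ++ b :: q ++ b :: r) ++ (a :: l₃) := by rw [heq]
        simp only [List.append_assoc, List.cons_append] at this ⊢
        rw [this]

/-- For a matrix with entries in `R_max = ℝ ∪ {-∞}` (no `+∞` entries), the Kleene star
`A* = I ⊕ A ⊕ A² ⊕ ⋯` exists (no entry of the entrywise supremum is `+∞`) iff the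
maximal cycle mean `λ(A)` is at most `0`. -/
theorem mstar_exists_iff_cycleBound {n : ℕ} (A : Matrix (Fin n) (Fin n) EReal)
    (hA : ∀ i j, A i j ≠ ⊤) :
    (∀ i j, mstar A i j ≠ ⊤) ↔ CycleBound A := by
  constructor
  · -- finiteness of the star implies the cycle bound
    intro hstar
    by_contra hc
    obtain ⟨l, hcyc, hw⟩ : ∃ l, IsCycle l ∧ 0 < cycleWeight A l := by
      by_contra h
      push_neg at h
      exact hc h
    rcases l with _ | ⟨a, t⟩
    · exact hcyc.1 rfl
    have h1 : cycleWeight A (a :: t) ≤ mpow A (t.length + 1) a a := by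
      rw [cycleWeight_eq]; exact pw_le_mpow A t a a
    set d := t.length + 1 with hd
    set p := mpow A d a a with hpdef
    have hp : 0 < p := lt_of_lt_of_le hw h1
    by_cases hpt : p = ⊤
    · exact hstar a a (top_le_iff.1 (hpt ▸ le_iSup (fun m => mpow A m a a) d))
    · have hpbot : p ≠ ⊥ := ne_bot_of_gt hp
      set r := p.toReal with hrdef
      have hpr : (r : EReal) = p := EReal.coe_toReal hpt hpbot
      have hr : 0 < r := by
        have := hp
        rw [← hpr] at this
        exact_mod_cast this
      have hrep : ∀ k : ℕ, ((k * r : ℝ) : EReal) ≤ mpow A (k * d) a a := by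
        intro k
        induction k with
        | zero => simp [mpow, mId]
        | succ k ih =>
            have hstep : mpow A (k * d) a a + mpow A d a a ≤ mpow A (k * d + d) a a := by
              rw [mpow_add A (k * d) d]
              exact le_iSup (fun c => mpow A (k * d) a c + mpow A d c a) a
            have hcast : (((k : ℕ) + 1 : ℕ) * r : ℝ) = (k * r : ℝ) + r := by push_cast; ring
            calc (((k + 1 : ℕ) * r : ℝ) : EReal) = ((k * r : ℝ) : EReal) + (r : EReal) := by
                  rw [← EReal.coe_add, hcast]
              _ ≤ mpow A (k * d) a a + p := add_le_add ih (le_of_eq hpr)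
              _ ≤ mpow A (k * d + d) a a := hstep
              _ = mpow A ((k + 1) * d) a a := by ring_nf
      have hle : ∀ k : ℕ, ((k * r : ℝ) : EReal) ≤ mstar A a a := fun k =>
        (hrep k).trans (le_iSup (fun m => mpow A m a a) (k * d))
      have hne := hstar a a
      have hub : mstar A a a ≤ ((mstar A a a).toReal : EReal) := EReal.le_coe_toReal hne
      obtain ⟨k, hk⟩ := exists_nat_gt ((mstar A a a).toReal / r)
      have h2 : ((k * r : ℝ) : EReal) ≤ ((mstar A a a).toReal : EReal) := (hle k).trans hub
      rw [EReal.coe_le_coe_iff] at h2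
      have h3 : (mstar A a a).toReal < k * r := by
        rw [div_lt_iff₀ hr] at hk
        linarith
      linarith
  · -- the cycle bound implies finiteness of the star
    intro hcb
    set C : ℝ := ∑ p : Fin n × Fin n, max ((A p.1 p.2).toReal) 0 with hCdef
    have hC0 : 0 ≤ C := Finset.sum_nonneg fun _ _ => le_max_right _ _
    have hAC : ∀ i j, A i j ≤ (C : EReal) := by
      intro i j
      have h1 : A i j ≤ ((A i j).toReal : EReal) := EReal.le_coe_toReal (hA i j)
      have h2 : (A i j).toReal ≤ C := by
        have hs : max ((A i j).toReal) 0 ≤ C :=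
          Finset.single_le_sum (f := fun p : Fin n × Fin n => max ((A p.1 p.2).toReal) 0)
            (fun _ _ => le_max_right _ _) (Finset.mem_univ (i, j))
        exact le_trans (le_max_left _ _) hs
      exact h1.trans (by exact_mod_cast h2)
    have pw_len : ∀ (l : List (Fin n)) (i : Fin n),
        pw A i l ≤ ((l.length * C : ℝ) : EReal) := by
      intro l
      induction l with
      | nil => intro i; simp [pw]
      | cons c t ih =>
          intro i
          have hcast : ((c :: t).length * C : ℝ) = C + t.length * C := by
            simp [List.length_cons]; ring
          calc pw A i (c :: t) = A i c + pw A c t := rfl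
            _ ≤ (C : EReal) + ((t.length * C : ℝ) : EReal) := add_le_add (hAC i c) (ih c)
            _ = (((c :: t).length * C : ℝ) : EReal) := by rw [← EReal.coe_add, hcast]
    have pw_bound : ∀ (m : ℕ) (l : List (Fin n)), l.length ≤ m → ∀ i : Fin n,
        pw A i l ≤ ((n * C : ℝ) : EReal) := by
      intro m
      induction m with
      | zero =>
          intro l hl i
          have : l = [] := List.eq_nil_of_length_eq_zero (Nat.le_zero.1 hl)
          subst this
          show (0 : EReal) ≤ _
          exact_mod_cast mul_nonneg (Nat.cast_nonneg n) hC0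
      | succ m ih =>
          intro l hl i
          by_cases hnd : (i :: l).Nodup
          · have hlen : l.length + 1 ≤ n := by simpa using hnd.length_le_card
            have hlen2 : l.length ≤ n := by omega
            have hlen' : (l.length : ℝ) ≤ n := by exact_mod_cast hlen2
            calc pw A i l ≤ ((l.length * C : ℝ) : EReal) := pw_len l i
              _ ≤ ((n * C : ℝ) : EReal) := by
                  exact_mod_cast mul_le_mul_of_nonneg_right hlen' hC0
          · obtain ⟨l₁, a, l₂, l₃, heq, hnd2⟩ := min_dup (i :: l).length (i :: l) le_rfl hnd
            have hcycle : pw A a (l₂ ++ [a]) ≤ 0 := by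
              rw [← cycleWeight_eq]
              exact hcb _ ⟨List.cons_ne_nil _ _, hnd2⟩
            rcases l₁ with _ | ⟨b, l₁'⟩
            · -- i = a, l = l₂ ++ a :: l₃
              simp only [List.nil_append, List.cons_append, List.cons.injEq] at heq
              obtain ⟨rfl, rfl⟩ := heq
              have hsplit : pw A i (l₂ ++ i :: l₃) = pw A i (l₂ ++ [i]) + pw A i l₃ :=
                pw_split A i l₃ l₂ i
              have hl3 : l₃.length ≤ m := by
                have := hl
                simp [List.length_append] at this
                omega
              calc pw A i (l₂ ++ i :: l₃) = pw A i (l₂ ++ [i]) + pw A i l₃ := hsplit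
                _ ≤ 0 + pw A i l₃ := add_le_add_left hcycle _
                _ = pw A i l₃ := zero_add _
                _ ≤ ((n * C : ℝ) : EReal) := ih l₃ hl3 i
            · -- i = b, l = l₁' ++ a :: l₂ ++ a :: l₃
              simp only [List.cons_append, List.cons.injEq] at heq
              obtain ⟨rfl, rfl⟩ := heq
              have h1 : pw A i (l₁' ++ a :: (l₂ ++ a :: l₃))
                  = pw A i (l₁' ++ [a]) + pw A a (l₂ ++ a :: l₃) := pw_split A a _ l₁' i
              have h2 : pw A a (l₂ ++ a :: l₃) = pw A a (l₂ ++ [a]) + pw A a l₃ :=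
                pw_split A a l₃ l₂ a
              have h3 : pw A i (l₁' ++ a :: l₃) = pw A i (l₁' ++ [a]) + pw A a l₃ :=
                pw_split A a l₃ l₁' i
              have hlnew : (l₁' ++ a :: l₃).length ≤ m := by
                have := hl
                simp [List.length_append] at this ⊢
                omega
              have harr : l₁' ++ a :: l₂ ++ a :: l₃ = l₁' ++ a :: (l₂ ++ a :: l₃) := by
                simp [List.append_assoc]
              calc pw A i (l₁' ++ a :: l₂ ++ a :: l₃)
                  = pw A i (l₁' ++ [a]) + (pw A a (l₂ ++ [a]) + pw A a l₃) := by
                    rw [harr, h1, h2]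
                _ ≤ pw A i (l₁' ++ [a]) + (0 + pw A a l₃) := by
                    exact add_le_add_right (add_le_add_left hcycle _) _
                _ = pw A i (l₁' ++ a :: l₃) := by rw [zero_add, ← h3]
                _ ≤ ((n * C : ℝ) : EReal) := ih _ hlnew i
    have key : ∀ (m : ℕ) (i j : Fin n),
        mpow A m i j ≤ ⨆ l : {l : List (Fin n) // l.length = m}, pw A i l.1 := by
      intro m
      induction m with
      | zero =>
          intro i j
          refine le_trans ?_ (le_iSup (fun l : {l : List (Fin n) // l.length = 0} => pw A i l.1)
            ⟨[], rfl⟩)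
          show mId n i j ≤ pw A i []
          unfold mId pw
          split <;> simp
      | succ m ih =>
          intro i j
          rw [mpow_succ']
          refine iSup_le fun k => ?_
          calc A i k + mpow A m k j
              ≤ A i k + ⨆ l : {l : List (Fin n) // l.length = m}, pw A k l.1 :=
                add_le_add_right (ih k j) _
            _ = ⨆ l : {l : List (Fin n) // l.length = m}, (A i k + pw A k l.1) :=
                ereal_add_iSup _ _
            _ ≤ ⨆ l : {l : List (Fin n) // l.length = m + 1}, pw A i l.1 := by
                refine iSup_le fun l => ?_
                exact le_iSup_of_le ⟨k :: l.1, by simp [l.2]⟩ le_rfl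
    intro i j
    have hbound : mstar A i j ≤ ((n * C : ℝ) : EReal) := by
      refine iSup_le fun m => ?_
      refine (key m i j).trans (iSup_le fun l => ?_)
      exact pw_bound l.1.length l.1 le_rfl i
    exact fun h => EReal.coe_ne_top _ (top_le_iff.1 (h ▸ hbound))

end MaxPlus
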